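/- Let b_1, …, b_n ∈ ℝ^n be linearly independent with Gram–Schmidt orthogonalization b_1*, …, b_n*, let B := max_{1≤i≤n} ‖b_i‖₂², and let L > 0 be such that every nonzero vector of the lattice Λ = {c_1 b_1 + ⋯ + c_n b_n : c_i ∈ ℤ} has squared norm at least L. Set d_j := ∏_{i=1}^{j} ‖b_i*‖₂² and D := d_1·d_2⋯d_n. Then (L/n)^{n(n+1)/2} ≤ D ≤ B^{n(n+1)/2}. -/

import Mathlib

open Finset MeasureTheory ENNReal

section aux

variable {n : ℕ}

noncomputable def ipp {n : ℕ} (x y : Fin n → ℝ) : ℝ := ∑ k, x k * y k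

lemma ipp_comm (x y : Fin n → ℝ) : ipp x y = ipp y x :=
  Finset.sum_congr rfl fun k _ => mul_comm _ _

lemma ipp_sub_left (x y z : Fin n → ℝ) : ipp (x - y) z = ipp x z - ipp y z := by
  unfold ipp; rw [← Finset.sum_sub_distrib]
  exact Finset.sum_congr rfl fun k _ => by simp [sub_mul]

lemma ipp_add_left (x y z : Fin n → ℝ) : ipp (x + y) z = ipp x z + ipp y z := by
  unfold ipp; rw [← Finset.sum_add_distrib]
  exact Finset.sum_congr rfl fun k _ => by simp [add_mul]

lemma ipp_smul_left (c : ℝ) (x y : Fin n → ℝ) : ipp (c • x) y = c * ipp x y := by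
  unfold ipp; rw [Finset.mul_sum]
  exact Finset.sum_congr rfl fun k _ => by simp; ring

lemma ipp_sum_left {ι : Type*} (s : Finset ι) (f : ι → (Fin n → ℝ)) (y : Fin n → ℝ) :
    ipp (∑ i ∈ s, f i) y = ∑ i ∈ s, ipp (f i) y := by
  classical
  induction s using Finset.induction_on with
  | empty => simp [ipp]
  | insert _ _ h ih => rw [Finset.sum_insert h, Finset.sum_insert h, ipp_add_left, ih]

lemma ipp_sum_right {ι : Type*} (s : Finset ι) (f : ι → (Fin n → ℝ)) (y : Fin n → ℝ) :
    ipp y (∑ i ∈ s, f i) = ∑ i ∈ s, ipp y (f i) := by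
  rw [ipp_comm, ipp_sum_left]
  exact Finset.sum_congr rfl fun k _ => ipp_comm _ _

lemma ipp_smul_right (c : ℝ) (x y : Fin n → ℝ) : ipp y (c • x) = c * ipp y x := by
  rw [ipp_comm, ipp_smul_left, ipp_comm]

lemma ipp_add_right (x y z : Fin n → ℝ) : ipp z (x + y) = ipp z x + ipp z y := by
  rw [ipp_comm, ipp_add_left, ipp_comm x z, ipp_comm y z]

lemma ipp_self_nonneg (x : Fin n → ℝ) : 0 ≤ ipp x x :=
  Finset.sum_nonneg fun k _ => mul_self_nonneg _

lemma ipp_self_pos {x : Fin n → ℝ} (hx : x ≠ 0) : 0 < ipp x x := by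
  rcases Function.ne_iff.1 hx with ⟨k, hk⟩
  exact Finset.sum_pos' (fun j _ => mul_self_nonneg _)
    ⟨k, Finset.mem_univ k, mul_self_pos.2 hk⟩

lemma sq_sum_eq_ipp (x : Fin n → ℝ) : ∑ k, x k ^ 2 = ipp x x := by
  unfold ipp; exact Finset.sum_congr rfl fun k _ => sq (x k) ▸ rfl

lemma aux_swap (m : ℕ) (a : Fin m → ℝ) (M : Fin m → Fin m → ℝ) :
    ∑ l, (∑ i, a i * M i l) ^ 2 = ∑ i, (a i * ∑ j, (a j * ∑ l, M i l * M j l)) := by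
  simp_rw [sq, Finset.sum_mul_sum, Finset.mul_sum]
  rw [Finset.sum_comm]
  refine Finset.sum_congr rfl fun i _ => ?_
  rw [Finset.sum_comm]
  exact Finset.sum_congr rfl fun j _ => Finset.sum_congr rfl fun l _ => by ring

lemma gauss_aux (n : ℕ) : ∑ j ∈ Finset.range n, (j + 1) = n * (n + 1) / 2 := by
  have h2 : (∑ j ∈ Finset.range n, (j + 1)) * 2 = n * (n + 1) := by
    induction n with
    | zero => simp
    | succ k ih => rw [Finset.sum_range_succ, add_mul, ih]; ring
  omega

end aux

theorem mink_box (m : ℕ) (u : Fin m → (Fin m → ℝ))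
    (hu : LinearIndependent ℝ u) (t : ℝ) (ht : 0 < t)
    (hdet : |(Matrix.of u).det| < t ^ m) :
    ∃ c : Fin m → ℤ, (¬ c = 0) ∧ ∀ l, |∑ i, (c i : ℝ) * u i l| ≤ t := by
  have hcard : Fintype.card (Fin m) = Module.finrank ℝ (Fin m → ℝ) := by simp
  rcases Nat.eq_zero_or_pos m with rfl | hm
  · exact absurd hdet (by simp [Matrix.det_fin_zero])
  have : Nonempty (Fin m) := ⟨⟨0, hm⟩⟩
  let bas : Module.Basis (Fin m) ℝ (Fin m → ℝ) := basisOfLinearIndependentOfCardEqFinrank hu hcard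
  have hbas : ⇑bas = u := coe_basisOfLinearIndependentOfCardEqFinrank hu hcard
  have fund := ZSpan.isAddFundamentalDomain' bas volume
  set S : Set (Fin m → ℝ) := Set.pi Set.univ fun _ => Set.Icc (-t) t with hS
  have hsymm : ∀ x ∈ S, -x ∈ S := by
    intro x hx l _
    have := hx l (Set.mem_univ l)
    simp only [Set.mem_Icc] at this ⊢
    constructor <;> simp <;> linarith [this.1, this.2]
  have hconv : Convex ℝ S := convex_pi fun _ _ => convex_Icc _ _
  have hvolS : volume S = ENNReal.ofReal ((2*t)^m) := by
    rw [hS, volume_pi_pi]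
    simp only [Real.volume_Icc, Finset.prod_const, Finset.card_univ, Fintype.card_fin]
    rw [← ENNReal.ofReal_pow (by linarith)]
    congr 1
    ring
  have hvolF : volume (ZSpan.fundamentalDomain bas) = ENNReal.ofReal |(Matrix.of u).det| := by
    rw [ZSpan.volume_fundamentalDomain, hbas]
  have hlt : volume (ZSpan.fundamentalDomain bas) * 2 ^ Module.finrank ℝ (Fin m → ℝ) < volume S := by
    rw [hvolF, hvolS, ← hcard, Fintype.card_fin]
    rw [show ((2:ENNReal)^m) = ENNReal.ofReal (2^m) by simp [ENNReal.ofReal_pow],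
      ← ENNReal.ofReal_mul (abs_nonneg _)]
    rw [ENNReal.ofReal_lt_ofReal_iff (by positivity)]
    calc |(Matrix.of u).det| * 2^m < t^m * 2^m := by
          apply mul_lt_mul_of_pos_right hdet (by positivity)
      _ = (2*t)^m := by rw [mul_pow]; ring
  have hcnt : Countable (Submodule.span ℤ (Set.range ⇑bas)).toAddSubgroup :=
    inferInstanceAs (Countable (Submodule.span ℤ (Set.range ⇑bas)))
  obtain ⟨x, hx0, hxS⟩ :=
    exists_ne_zero_mem_lattice_of_measure_mul_two_pow_lt_measure fund hsymm hconv hlt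
  have hxmem : (x : Fin m → ℝ) ∈ Submodule.span ℤ (Set.range u) := by
    have h2 : (x : Fin m → ℝ) ∈ Submodule.span ℤ (Set.range ⇑bas) := x.2
    rw [← hbas]; exact h2
  rw [Submodule.mem_span_range_iff_exists_fun] at hxmem
  obtain ⟨c, hc⟩ := hxmem
  refine ⟨c, ?_, ?_⟩
  · rintro rfl
    apply hx0
    have : (x : Fin m → ℝ) = 0 := by rw [← hc]; simp
    exact Subtype.ext this
  · intro l
    have hl := hxS l (Set.mem_univ l)
    simp only [Set.mem_Icc] at hl
    have : (x : Fin m → ℝ) l = ∑ i, (c i : ℝ) * u i l := by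
      rw [← hc]
      simp [Finset.sum_apply]
    rw [abs_le, ← this]
    exact hl

set_option maxHeartbeats 1000000 in
theorem stmt_15 (n : ℕ) (b bstar : Fin n → (Fin n → ℝ)) (μ : Fin n → Fin n → ℝ)
    (hind : LinearIndependent ℝ b)
    (hGS : ∀ i, bstar i = b i - ∑ l ∈ Finset.Iio i, μ i l • bstar l)
    (hμ : ∀ i l : Fin n, l < i →
      μ i l = (∑ k, b i k * bstar l k) / (∑ k, bstar l k * bstar l k))
    (B : ℝ) (hB : ∀ i, ∑ k, b i k ^ 2 ≤ B)
    (L : ℝ) (hL : 0 < L)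
    (hmin : ∀ c : Fin n → ℤ, (∑ i, (c i : ℝ) • b i) ≠ 0 →
      L ≤ ∑ k, (∑ i, (c i : ℝ) • b i) k ^ 2) :
    (L / (n : ℝ)) ^ (n * (n + 1) / 2) ≤
        (∏ j ∈ Finset.range n,
          ∏ l ∈ Finset.univ.filter fun l : Fin n => (l : ℕ) < j + 1,
            ∑ k, bstar l k ^ 2) ∧
      (∏ j ∈ Finset.range n,
          ∏ l ∈ Finset.univ.filter fun l : Fin n => (l : ℕ) < j + 1,
            ∑ k, bstar l k ^ 2) ≤ B ^ (n * (n + 1) / 2) := by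
  rcases Nat.eq_zero_or_pos n with rfl | hn
  · simp
  classical
  -- basic consequences of Gram-Schmidt
  have h1 : ∀ i, b i = bstar i + ∑ l ∈ Finset.Iio i, μ i l • bstar l := by
    intro i; rw [hGS i]; abel
  have hspan : ∀ i : Fin n, bstar i ∈ Submodule.span ℝ (b '' Set.Iic i) := by
    suffices H : ∀ N : ℕ, ∀ i : Fin n, (i : ℕ) < N →
        bstar i ∈ Submodule.span ℝ (b '' Set.Iic i) from fun i => H n i i.isLt
    intro N
    induction N with
    | zero => intro i hi; omega
    | succ N ih =>
      intro i hi
      rw [hGS i]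
      refine Submodule.sub_mem _ (Submodule.subset_span ⟨i, Set.mem_Iic.2 le_rfl, rfl⟩)
        (Submodule.sum_mem _ ?_)
      intro l hl
      have hl' : l < i := Finset.mem_Iio.1 hl
      have hl'' : (l : ℕ) < (i : ℕ) := hl'
      refine Submodule.smul_mem _ _ ?_
      exact Submodule.span_mono (Set.image_mono (Set.Iic_subset_Iic.2 hl'.le))
        (ih l (by omega))
  have hbs0 : ∀ i, bstar i ≠ 0 := by
    intro i h0
    have hbi : b i = ∑ l ∈ Finset.Iio i, μ i l • bstar l := by
      rw [h1 i, h0]; simp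
    have hmem : b i ∈ Submodule.span ℝ (b '' Set.Iio i) := by
      rw [hbi]
      refine Submodule.sum_mem _ fun l hl => Submodule.smul_mem _ _ ?_
      have hl' : l < i := Finset.mem_Iio.1 hl
      exact Submodule.span_mono
        (Set.image_mono (fun x hx => lt_of_le_of_lt hx hl')) (hspan l)
    exact hind.notMem_span_image (s := Set.Iio i) (by simp) hmem
  have hpos : ∀ l, 0 < ipp (bstar l) (bstar l) := fun l => ipp_self_pos (hbs0 l)
  have hμ' : ∀ i l : Fin n, l < i →
      μ i l = ipp (b i) (bstar l) / ipp (bstar l) (bstar l) := fun i l h => hμ i l h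
  -- orthogonality
  have horth : ∀ i l : Fin n, l < i → ipp (bstar i) (bstar l) = 0 := by
    suffices H : ∀ N : ℕ, ∀ i : Fin n, (i : ℕ) < N → ∀ l, l < i →
        ipp (bstar i) (bstar l) = 0 from fun i l h => H n i i.isLt l h
    intro N
    induction N with
    | zero => intro i hi; omega
    | succ N ih =>
      intro i hi l hl
      have hl'' : (l : ℕ) < (i : ℕ) := hl
      rw [hGS i, ipp_sub_left, ipp_sum_left]
      have hsum : ∑ k ∈ Finset.Iio i, ipp (μ i k • bstar k) (bstar l)
          = μ i l * ipp (bstar l) (bstar l) := by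
        rw [Finset.sum_eq_single l]
        · rw [ipp_smul_left]
        · intro k hk hkl
          have hk0 : k < i := Finset.mem_Iio.1 hk
          have hk' : (k : ℕ) < (i : ℕ) := hk0
          rw [ipp_smul_left]
          rcases lt_or_gt_of_ne hkl with h | h
          · rw [ipp_comm, ih l (by omega) k h, mul_zero]
          · rw [ih k (by omega) l h, mul_zero]
        · intro h; exact absurd (Finset.mem_Iio.2 hl) h
      rw [hsum, hμ' i l hl, div_mul_cancel₀ _ (hpos l).ne', sub_self]
  -- inner products of b with bstar
  have hbw_gt : ∀ i l : Fin n, i < l → ipp (b i) (bstar l) = 0 := by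
    intro i l h
    rw [h1 i, ipp_add_left, ipp_sum_left]
    rw [ipp_comm, horth l i h]
    rw [Finset.sum_eq_zero, add_zero]
    intro k hk
    have hk' : k < i := Finset.mem_Iio.1 hk
    rw [ipp_smul_left, ipp_comm, horth l k (hk'.trans h), mul_zero]
  have hbw_eq : ∀ i, ipp (b i) (bstar i) = ipp (bstar i) (bstar i) := by
    intro i
    rw [h1 i, ipp_add_left, ipp_sum_left]
    rw [Finset.sum_eq_zero, add_zero]
    intro k hk
    have hk' : k < i := Finset.mem_Iio.1 hk
    rw [ipp_smul_left, ipp_comm, horth i k hk', mul_zero]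
  have hbw_lt : ∀ i l : Fin n, l < i →
      ipp (b i) (bstar l) = μ i l * ipp (bstar l) (bstar l) := by
    intro i l h
    rw [hμ' i l h, div_mul_cancel₀ _ (hpos l).ne']
  -- upper bound per vector
  have hr2B : ∀ l, ipp (bstar l) (bstar l) ≤ B := by
    intro l
    have h2 : ipp (b l) (b l) ≤ B := by rw [← sq_sum_eq_ipp]; exact hB l
    refine le_trans ?_ h2
    nth_rewrite 2 [h1 l]
    rw [ipp_add_right, ipp_sum_right]
    have : 0 ≤ ∑ k ∈ Finset.Iio l, ipp (b l) (μ l k • bstar k) := by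
      refine Finset.sum_nonneg fun k hk => ?_
      have hk' : k < l := Finset.mem_Iio.1 hk
      rw [ipp_smul_right, hbw_lt l k hk']
      have := (hpos k).le
      nlinarith [sq_nonneg (μ l k)]
    rw [hbw_eq l]
    linarith
  -- the Gram identity
  have hgram : ∀ (m : ℕ), m ≤ n → ∀ i j : Fin n, (i : ℕ) < m → (j : ℕ) < m →
      ipp (b i) (b j) = ∑ l ∈ Finset.univ.filter (fun l : Fin n => (l : ℕ) < m),
        ipp (b i) (bstar l) * ipp (b j) (bstar l) / ipp (bstar l) (bstar l) := by
    intro m hmn i j hi hj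
    have hsub : Finset.Iic j ⊆ Finset.univ.filter (fun l : Fin n => (l : ℕ) < m) := by
      intro l hl
      have : l ≤ j := Finset.mem_Iic.1 hl
      simp only [Finset.mem_filter, Finset.mem_univ, true_and]
      omega
    have lhs_eq : ipp (b i) (b j)
        = ipp (b i) (bstar j) + ∑ l ∈ Finset.Iio j, μ j l * ipp (b i) (bstar l) := by
      conv_lhs => rw [h1 j]
      rw [ipp_add_right, ipp_sum_right]
      congr 1
      exact Finset.sum_congr rfl fun l _ => ipp_smul_right _ _ _
    have rhs_eq : ∑ l ∈ Finset.univ.filter (fun l : Fin n => (l : ℕ) < m),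
          ipp (b i) (bstar l) * ipp (b j) (bstar l) / ipp (bstar l) (bstar l)
        = ipp (b i) (bstar j) + ∑ l ∈ Finset.Iio j, μ j l * ipp (b i) (bstar l) := by
      rw [← Finset.sum_subset hsub (fun l _ hl => by
        rw [hbw_gt j l (by simpa using hl), mul_zero, zero_div])]
      rw [← Finset.Iio_insert j, Finset.sum_insert (by simp)]
      congr 1
      · rw [hbw_eq j, mul_div_assoc, div_self (hpos j).ne', mul_one]
      · refine Finset.sum_congr rfl fun l hl => ?_
        have hl' : l < j := Finset.mem_Iio.1 hl
        rw [hbw_lt j l hl']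
        field_simp [(hpos l).ne']
    rw [lhs_eq, rhs_eq]
  -- the filter set as an embedded copy of Fin m
  have hFm : ∀ (m : ℕ) (hmn : m ≤ n),
      Finset.univ.filter (fun l : Fin n => (l : ℕ) < m)
        = Finset.map (Fin.castLEEmb hmn) Finset.univ := by
    intro m hmn
    ext l
    simp only [Finset.mem_filter, Finset.mem_univ, true_and, Finset.mem_map,
      Fin.castLEEmb, Function.Embedding.coeFn_mk, Fin.castLE]
    constructor
    · intro h; exact ⟨⟨l, h⟩, by simp [Fin.ext_iff]⟩
    · rintro ⟨a, ha⟩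
      have : (a : ℕ) = (l : ℕ) := by
        simpa [Fin.ext_iff] using ha
      omega
  -- lower bound per m, via Minkowski
  have hlow : ∀ (m : ℕ) (hmn : m ≤ n), 0 < m →
      (L / (n : ℝ)) ^ m ≤ ∏ l ∈ Finset.univ.filter (fun l : Fin n => (l : ℕ) < m),
        ∑ k, bstar l k ^ 2 := by
    intro m hmn hm
    by_contra hcon
    push_neg at hcon
    rw [hFm m hmn, Finset.prod_map] at hcon
    simp only [Fin.castLEEmb, Function.Embedding.coeFn_mk] at hcon
    set e : Fin m → Fin n := Fin.castLE hmn with he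
    have hconv : ∀ l : Fin m, ∑ k, bstar (e l) k ^ 2 = ipp (bstar (e l)) (bstar (e l)) :=
      fun l => sq_sum_eq_ipp _
    rw [Finset.prod_congr rfl (fun l _ => hconv l)] at hcon
    -- square roots
    set ρ : Fin m → ℝ := fun l => Real.sqrt (ipp (bstar (e l)) (bstar (e l))) with hρdef
    have hρpos : ∀ l, 0 < ρ l := fun l => Real.sqrt_pos.2 (hpos (e l))
    have hρsq : ∀ l, ρ l ^ 2 = ipp (bstar (e l)) (bstar (e l)) :=
      fun l => Real.sq_sqrt (hpos (e l)).le
    set Pr : ℝ := ∏ l, ρ l with hPrdef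
    have hPrpos : 0 < Pr := Finset.prod_pos fun l _ => hρpos l
    have hPrsq : Pr ^ 2 = ∏ l, ipp (bstar (e l)) (bstar (e l)) := by
      rw [hPrdef, ← Finset.prod_pow]
      exact Finset.prod_congr rfl fun l _ => hρsq l
    set τ : ℝ := Real.sqrt (L / n) with hτdef
    have hLn : 0 < L / (n : ℝ) := div_pos hL (by exact_mod_cast hn)
    have hτpos : 0 < τ := Real.sqrt_pos.2 hLn
    have hτsq : τ ^ 2 = L / n := Real.sq_sqrt hLn.le
    have hPrlt : Pr < τ ^ m := by
      have h2 : Pr ^ 2 < (τ ^ m) ^ 2 := by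
        rw [hPrsq, ← pow_mul, mul_comm m 2, pow_mul, hτsq]
        exact hcon
      exact lt_of_pow_lt_pow_left₀ 2 (by positivity) h2
    set x0 : ℝ := (Pr + τ ^ m) / 2 with hx0def
    have hx0pos : 0 < x0 := hx0def ▸ div_pos (add_pos hPrpos (pow_pos hτpos m)) two_pos
    have hPrx0 : Pr < x0 := by rw [hx0def]; linarith
    have hx0τ : x0 < τ ^ m := by rw [hx0def]; linarith
    set t : ℝ := x0 ^ ((m : ℝ)⁻¹) with htdef
    have htpos : 0 < t := Real.rpow_pos_of_pos hx0pos _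
    have htm : t ^ m = x0 := Real.rpow_inv_natCast_pow hx0pos.le (by omega)
    have htτ : t < τ := by
      by_contra hcc
      push_neg at hcc
      have : τ ^ m ≤ t ^ m := pow_le_pow_left₀ hτpos.le hcc m
      rw [htm] at this
      linarith
    -- the coordinate matrix
    set u : Fin m → Fin m → ℝ := fun i l => ipp (b (e i)) (bstar (e l)) / ρ l with hudef
    have hel : ∀ i l : Fin m, i < l → e i < e l := fun i l h => h
    have hutri : ∀ i l : Fin m, i < l → u i l = 0 := by
      intro i l h
      rw [hudef]
      simp only
      rw [hbw_gt (e i) (e l) (hel i l h), zero_div]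
    have hudiag : ∀ i : Fin m, u i i = ρ i := by
      intro i
      rw [hudef]
      simp only
      rw [hbw_eq (e i), ← hρsq i, sq]
      field_simp
    have hdet : (Matrix.of u).det = Pr := by
      rw [Matrix.det_of_lowerTriangular (Matrix.of u)
        (fun i j hij => hutri i j (by exact hij))]
      exact Finset.prod_congr rfl fun i _ => hudiag i
    have huli : LinearIndependent ℝ u := by
      have : IsUnit (Matrix.of u) := by
        rw [Matrix.isUnit_iff_isUnit_det, hdet, isUnit_iff_ne_zero]
        exact hPrpos.ne'
      exact Matrix.linearIndependent_rows_iff_isUnit.2 this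
    obtain ⟨c, hc0, hcb⟩ := mink_box m u huli t htpos (by
      rw [hdet, abs_of_pos hPrpos, htm]; exact hPrx0)
    -- build the lattice vector
    set c' : Fin n → ℤ := fun i => if h : (i : ℕ) < m then c ⟨i, h⟩ else 0 with hc'def
    have hc'e : ∀ i : Fin m, c' (e i) = c i := by
      intro i
      rw [hc'def]
      simp only
      rw [dif_pos (show ((e i) : ℕ) < m from i.isLt)]
      exact congrArg c (Fin.ext rfl)
    have hXne : (∑ i, (c' i : ℝ) • b i) ≠ 0 := by
      intro hX
      apply hc0
      funext i
      have hall := Fintype.linearIndependent_iff.1 hind (fun i => (c' i : ℝ)) hX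
      have h9 : (c' (e i) : ℝ) = 0 := hall (e i)
      rw [hc'e i] at h9
      exact_mod_cast h9
    have hLle := hmin c' hXne
    rw [sq_sum_eq_ipp] at hLle
    -- restrict the sum
    have hXsum : (∑ i, (c' i : ℝ) • b i) = ∑ i : Fin m, (c i : ℝ) • b (e i) := by
      rw [← Finset.sum_filter_of_ne (p := fun i : Fin n => (i : ℕ) < m)
        (by intro i _ hne; by_contra hh; apply hne; rw [hc'def]; simp [dif_neg hh])]
      rw [hFm m hmn, Finset.sum_map]
      exact Finset.sum_congr rfl fun i _ => by rw [show (Fin.castLEEmb hmn) i = e i from rfl, hc'e]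
    -- compute the norm
    have hipX : ipp (∑ i, (c' i : ℝ) • b i) (∑ i, (c' i : ℝ) • b i)
        = ∑ l : Fin m, (∑ i : Fin m, (c i : ℝ) * u i l) ^ 2 := by
      rw [hXsum, aux_swap m (fun i => (c i : ℝ)) u, ipp_sum_left]
      refine Finset.sum_congr rfl fun i _ => ?_
      rw [ipp_smul_left, ipp_sum_right]
      congr 1
      refine Finset.sum_congr rfl fun j _ => ?_
      rw [ipp_smul_right]
      congr 1
      have hg := hgram m hmn (e i) (e j) i.isLt j.isLt
      rw [hg, hFm m hmn, Finset.sum_map]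
      refine Finset.sum_congr rfl fun l _ => ?_
      rw [show (Fin.castLEEmb hmn) l = e l from rfl, hudef]
      simp only
      rw [← hρsq l]
      field_simp
    have hbound : ∑ l : Fin m, (∑ i : Fin m, (c i : ℝ) * u i l) ^ 2 ≤ m * t ^ 2 := by
      calc ∑ l : Fin m, (∑ i : Fin m, (c i : ℝ) * u i l) ^ 2
          ≤ ∑ _l : Fin m, t ^ 2 := by
            refine Finset.sum_le_sum fun l _ => ?_
            have := hcb l
            rw [abs_le] at this
            nlinarith [this.1, this.2]
        _ = m * t ^ 2 := by simp [mul_comm]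
    have hfin : (m : ℝ) * t ^ 2 < L := by
      have h1' : t ^ 2 < τ ^ 2 := by
        apply pow_lt_pow_left₀ htτ htpos.le
        omega
      have h2' : (m : ℝ) * τ ^ 2 ≤ L := by
        rw [hτsq]
        have hmn' : (m : ℝ) ≤ (n : ℝ) := by exact_mod_cast hmn
        have hstep : (m : ℝ) * (L / n) ≤ (n : ℝ) * (L / n) :=
          mul_le_mul_of_nonneg_right hmn' hLn.le
        have heq : (n : ℝ) * (L / n) = L := by field_simp
        linarith
      calc (m : ℝ) * t ^ 2 < m * τ ^ 2 := by
            apply mul_lt_mul_of_pos_left h1'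
            exact_mod_cast hm
        _ ≤ L := h2'
    rw [hipX] at hLle
    linarith
  -- upper bound per m
  have hup : ∀ (m : ℕ), m ≤ n →
      (∏ l ∈ Finset.univ.filter (fun l : Fin n => (l : ℕ) < m),
        ∑ k, bstar l k ^ 2) ≤ B ^ m := by
    intro m hmn
    have hcard : (Finset.univ.filter (fun l : Fin n => (l : ℕ) < m)).card = m := by
      rw [hFm m hmn, Finset.card_map, Finset.card_univ, Fintype.card_fin]
    calc (∏ l ∈ Finset.univ.filter (fun l : Fin n => (l : ℕ) < m), ∑ k, bstar l k ^ 2)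
        ≤ ∏ _l ∈ Finset.univ.filter (fun l : Fin n => (l : ℕ) < m), B := by
          refine Finset.prod_le_prod (fun l _ => ?_) (fun l _ => ?_)
          · exact Finset.sum_nonneg fun k _ => sq_nonneg _
          · rw [sq_sum_eq_ipp]; exact hr2B l
      _ = B ^ m := by rw [Finset.prod_const, hcard]
  -- Gauss sum
  have hsum : ∑ j ∈ Finset.range n, (j + 1) = n * (n + 1) / 2 := gauss_aux n
  constructor
  · calc (L / (n : ℝ)) ^ (n * (n + 1) / 2)
        = ∏ j ∈ Finset.range n, (L / (n : ℝ)) ^ (j + 1) := by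
          rw [Finset.prod_pow_eq_pow_sum, hsum]
      _ ≤ _ := by
          refine Finset.prod_le_prod (fun j _ => by positivity) (fun j hj => ?_)
          exact hlow (j + 1) (by simpa using Finset.mem_range.1 hj) (by omega)
  · calc _ ≤ ∏ j ∈ Finset.range n, B ^ (j + 1) := by
          refine Finset.prod_le_prod (fun j _ => ?_) (fun j hj => ?_)
          · exact Finset.prod_nonneg fun l _ => Finset.sum_nonneg fun k _ => sq_nonneg _
          · exact hup (j + 1) (by simpa using Finset.mem_range.1 hj)
      _ = B ^ (n * (n + 1) / 2) := by rw [Finset.prod_pow_eq_pow_sum, hsum]
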